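/- arXiv:2208.12882 — 3 statements merged into one kernel-verified Lean document; each statement's English description precedes it below -/
import Mathlib

section
/- Let K and H be topological groups acting continuously on topological spaces Z and Y respectively, let m : K → H be a continuous group homomorphism and ε : Z → Y a continuous map with ε(k • z) = m(k) • ε(z) for all k ∈ K, z ∈ Z, and assume (m, ε) is an essential equivalence. Let (H × Z)/∼ be the quotient of H × Z by the relation (h, z) ∼ (h · m(k)⁻¹, k • z) for k ∈ K, endowed with the quotient topology and the H-action induced by left multiplication on the first coordinate. Then the map (h, z) ↦ h • ε(z) descends to a well-defined H-equivariant homeomorphism (H × Z)/∼ → Y. -/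
/-- Let `K` and `H` be topological groups acting continuously on topological spaces `Z` and `Y`,
let `m : K → H` be a continuous homomorphism and `ε : Z → Y` a continuous map with
`ε (k • z) = m k • ε z`, and assume `(m, ε)` is an essential equivalence. Let `(H × Z)/∼` be the
quotient of `H × Z` by the relation `(h, z) ∼ (h * (m k)⁻¹, k • z)` for `k ∈ K`, with the quotient
topology and the `H`-action induced by left multiplication on the first coordinate. Then the map
`(h, z) ↦ h • ε z` descends to a well-defined `H`-equivariant homeomorphism `(H × Z)/∼ → Y`. -/
theorem essentialEquivalence_induced_homeomorph
    {K H Z Y : Type*} [Group K] [TopologicalSpace K] [IsTopologicalGroup K]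
    [Group H] [TopologicalSpace H] [IsTopologicalGroup H]
    [TopologicalSpace Z] [MulAction K Z] [ContinuousSMul K Z]
    [TopologicalSpace Y] [MulAction H Y] [ContinuousSMul H Y]
    (m : K →* H) (hm : Continuous m) (ε : Z → Y) (hε : Continuous ε)
    (hequiv : ∀ (k : K) (z : Z), ε (k • z) = m k • ε z)
    (hES_cont : Continuous fun p : H × Z => p.1 • ε p.2)
    (hES_open : IsOpenMap fun p : H × Z => p.1 • ε p.2)
    (hES_surj : Function.Surjective fun p : H × Z => p.1 • ε p.2)
    (hFF : ∀ (z z' : Z) (h : H), h • ε z = ε z' → ∃! k : K, k • z = z' ∧ m k = h) :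
    ∃ φ : Quot (fun a b : H × Z => ∃ k : K, b = (a.1 * (m k)⁻¹, k • a.2)) ≃ₜ Y,
      (∀ (h : H) (z : Z),
        φ (Quot.mk (fun a b : H × Z => ∃ k : K, b = (a.1 * (m k)⁻¹, k • a.2)) (h, z)) = h • ε z) ∧
      (∀ (h' h : H) (z : Z),
        φ (Quot.mk (fun a b : H × Z => ∃ k : K, b = (a.1 * (m k)⁻¹, k • a.2)) (h' * h, z)) =
          h' • φ (Quot.mk (fun a b : H × Z => ∃ k : K, b = (a.1 * (m k)⁻¹, k • a.2)) (h, z))) := by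
  set r := fun a b : H × Z => ∃ k : K, b = (a.1 * (m k)⁻¹, k • a.2) with hr
  set f := fun p : H × Z => p.1 • ε p.2 with hf
  have hresp : ∀ a b : H × Z, r a b → f a = f b := by
    rintro ⟨h, z⟩ b ⟨k, rfl⟩
    simp only [hf, hequiv, smul_smul, inv_mul_cancel_right]
  let g : Quot r → Y := Quot.lift f hresp
  have hgsurj : Function.Surjective g := by
    intro y
    obtain ⟨p, hp⟩ := hES_surj y
    exact ⟨Quot.mk r p, hp⟩
  have hginj : Function.Injective g := by
    intro a b
    induction a using Quot.ind with | _ a =>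
    induction b using Quot.ind with | _ b =>
    obtain ⟨h, z⟩ := a; obtain ⟨h', z'⟩ := b
    intro hab
    have hsm : (h'⁻¹ * h) • ε z = ε z' := by
      have : h • ε z = h' • ε z' := hab
      rw [mul_smul, this, inv_smul_smul]
    obtain ⟨k, ⟨hk1, hk2⟩, -⟩ := hFF z z' (h'⁻¹ * h) hsm
    apply Quot.sound
    refine ⟨k, ?_⟩
    rw [hk2, hk1]
    simp [mul_assoc]
  have hgcont : Continuous g := continuous_quot_lift hresp hES_cont
  have hgopen : IsOpenMap g := by
    intro U hU
    have : g '' U = f '' (Quot.mk r ⁻¹' U) := by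
      ext y
      constructor
      · rintro ⟨x, hx, rfl⟩
        induction x using Quot.ind with | _ p =>
        exact ⟨p, hx, rfl⟩
      · rintro ⟨p, hp, rfl⟩
        exact ⟨Quot.mk r p, hp, rfl⟩
    rw [this]
    exact hES_open _ (hU.preimage continuous_quot_mk)
  let e : Quot r ≃ Y := Equiv.ofBijective g ⟨hginj, hgsurj⟩
  refine ⟨Equiv.toHomeomorphOfContinuousOpen e hgcont hgopen, ?_, ?_⟩
  · intro h z; rfl
  · intro h' h z
    show (h' * h) • ε z = h' • (h • ε z)
    rw [mul_smul]
end

section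
/- Let K and G be topological groups, let K act continuously on a topological space Z and let G act continuously on a topological space X. Let m, n : K → G be continuous homomorphisms, let φ : Z → X be a continuous map satisfying φ(k • z) = n(k) • φ(z) for all k ∈ K, z ∈ Z, and let λ : Z → G be a continuous map satisfying n(k) = λ(k • z) · m(k) · λ(z)⁻¹ for all k ∈ K, z ∈ Z. Consider the quotient (G × Z)/∼ by the relation (g, z) ∼ (g · m(k)⁻¹, k • z) for k ∈ K, with the quotient topology and the G-action induced by left multiplication on the first coordinate. Then the map G × Z → X, (g, z) ↦ (g · λ(z)⁻¹) • φ(z), is constant on equivalence classes, and the induced continuous map φ̂ : (G × Z)/∼ → X is G-equivariant, i.e. φ̂(g' · [g, z]) = g' • φ̂([g, z]) for all g' ∈ G. -/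
/-- Let `K, G` be topological groups, `K` acting continuously on `Z` and `G` acting continuously
on `X`. Let `m, n : K → G` be continuous homomorphisms, `φ : Z → X` continuous with
`φ (k • z) = n k • φ z`, and `λ : Z → G` continuous with `n k = λ (k • z) * m k * (λ z)⁻¹`.
Consider the quotient `(G × Z)/∼` by the relation `(g, z) ∼ (g * (m k)⁻¹, k • z)`, with the
quotient topology and the `G`-action induced by left multiplication on the first coordinate.
Then the map `G × Z → X, (g, z) ↦ (g * (λ z)⁻¹) • φ z` is constant on equivalence classes, and
the induced continuous map `φ̂ : (G × Z)/∼ → X` is `G`-equivariant. -/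
theorem naturally_conjugate_induced_equivariant_map
    {K G Z X : Type*} [Group K] [TopologicalSpace K] [IsTopologicalGroup K]
    [Group G] [TopologicalSpace G] [IsTopologicalGroup G]
    [TopologicalSpace Z] [MulAction K Z] [ContinuousSMul K Z]
    [TopologicalSpace X] [MulAction G X] [ContinuousSMul G X]
    (m n : K →* G) (hm : Continuous m) (hn : Continuous n)
    (φ : Z → X) (hφ : Continuous φ)
    (hequiv : ∀ (k : K) (z : Z), φ (k • z) = n k • φ z)
    (lam : Z → G) (hlam : Continuous lam)
    (hconj : ∀ (k : K) (z : Z), n k = lam (k • z) * m k * (lam z)⁻¹) :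
    (∀ a b : G × Z, (∃ k : K, b = (a.1 * (m k)⁻¹, k • a.2)) →
        (a.1 * (lam a.2)⁻¹) • φ a.2 = (b.1 * (lam b.2)⁻¹) • φ b.2) ∧
    ∃ φhat : Quot (fun a b : G × Z => ∃ k : K, b = (a.1 * (m k)⁻¹, k • a.2)) → X,
      Continuous φhat ∧
      (∀ (g : G) (z : Z),
        φhat (Quot.mk (fun a b : G × Z => ∃ k : K, b = (a.1 * (m k)⁻¹, k • a.2)) (g, z)) =
          (g * (lam z)⁻¹) • φ z) ∧
      (∀ (g' g : G) (z : Z),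
        φhat (Quot.mk (fun a b : G × Z => ∃ k : K, b = (a.1 * (m k)⁻¹, k • a.2)) (g' * g, z)) =
          g' • φhat (Quot.mk (fun a b : G × Z => ∃ k : K, b = (a.1 * (m k)⁻¹, k • a.2)) (g, z))) := by
  have hconst : ∀ a b : G × Z, (∃ k : K, b = (a.1 * (m k)⁻¹, k • a.2)) →
      (a.1 * (lam a.2)⁻¹) • φ a.2 = (b.1 * (lam b.2)⁻¹) • φ b.2 := by
    rintro ⟨g, z⟩ b ⟨k, rfl⟩
    simp only
    rw [hequiv, smul_smul, hconj k z]
    congr 1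
    group
  refine ⟨hconst, Quot.lift (fun a => (a.1 * (lam a.2)⁻¹) • φ a.2) hconst, ?_, fun g z => rfl,
    fun g' g z => ?_⟩
  · exact continuous_quot_lift _
      ((continuous_fst.mul ((hlam.comp continuous_snd).inv)).smul (hφ.comp continuous_snd))
  · show (g' * g * (lam z)⁻¹) • φ z = g' • (g * (lam z)⁻¹) • φ z
    rw [smul_smul, mul_assoc]
end

section
/- Let K and G be topological groups, let K act continuously on a topological space Z, let m, n : K → G be continuous homomorphisms, and let λ : Z → G be a continuous map satisfying n(k) = λ(k • z) · m(k) · λ(z)⁻¹ for all k ∈ K, z ∈ Z. Let E = (G × G × Z)/∼ be the quotient by the relation (g, h, z) ∼ (g · n(k), h · m(k), k⁻¹ • z) for k ∈ K, and let W = (G × Z)/∼' be the quotient by the relation (h, z) ∼' (h · m(k), k⁻¹ • z) for k ∈ K, both with the quotient topology. Then the map w : E → W given by w([g, h, z]) = [h, z] is well defined, the map τ : W → E given by τ([h, z]) = [h · λ(z)⁻¹, h, z] is well defined and continuous, and w ∘ τ is the identity of W; that is, τ is a global section of w. -/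
/-- Let `K, G` be topological groups, `K` acting continuously on `Z`, `m, n : K → G` continuous
homomorphisms, and `λ : Z → G` continuous with `n k = λ (k • z) * m k * (λ z)⁻¹`. Let
`E = (G × G × Z)/∼` be the quotient by `(g, h, z) ∼ (g * n k, h * m k, k⁻¹ • z)` and
`W = (G × Z)/∼'` the quotient by `(h, z) ∼' (h * m k, k⁻¹ • z)`, both with the quotient topology.
Then `w : E → W, [g, h, z] ↦ [h, z]` is well defined, `τ : W → E, [h, z] ↦ [h * (λ z)⁻¹, h, z]`
is well defined and continuous, and `w ∘ τ = id`; that is, `τ` is a global section of `w`. -/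
theorem global_section_of_naturally_conjugate
    {K G Z : Type*} [Group K] [TopologicalSpace K] [IsTopologicalGroup K]
    [Group G] [TopologicalSpace G] [IsTopologicalGroup G]
    [TopologicalSpace Z] [MulAction K Z] [ContinuousSMul K Z]
    (m n : K →* G) (hm : Continuous m) (hn : Continuous n)
    (lam : Z → G) (hlam : Continuous lam)
    (hconj : ∀ (k : K) (z : Z), n k = lam (k • z) * m k * (lam z)⁻¹) :
    ∃ w : Quot (fun a b : G × G × Z => ∃ k : K, b = (a.1 * n k, a.2.1 * m k, k⁻¹ • a.2.2)) →
        Quot (fun a b : G × Z => ∃ k : K, b = (a.1 * m k, k⁻¹ • a.2)),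
      (∀ (g h : G) (z : Z),
        w (Quot.mk (fun a b : G × G × Z => ∃ k : K, b = (a.1 * n k, a.2.1 * m k, k⁻¹ • a.2.2))
            (g, h, z)) =
          Quot.mk (fun a b : G × Z => ∃ k : K, b = (a.1 * m k, k⁻¹ • a.2)) (h, z)) ∧
      ∃ τ : Quot (fun a b : G × Z => ∃ k : K, b = (a.1 * m k, k⁻¹ • a.2)) →
          Quot (fun a b : G × G × Z => ∃ k : K, b = (a.1 * n k, a.2.1 * m k, k⁻¹ • a.2.2)),
        Continuous τ ∧
        (∀ (h : G) (z : Z),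
          τ (Quot.mk (fun a b : G × Z => ∃ k : K, b = (a.1 * m k, k⁻¹ • a.2)) (h, z)) =
            Quot.mk (fun a b : G × G × Z => ∃ k : K, b = (a.1 * n k, a.2.1 * m k, k⁻¹ • a.2.2))
              (h * (lam z)⁻¹, h, z)) ∧
        (∀ x, w (τ x) = x) := by

  classical
  set rE := fun a b : G × G × Z => ∃ k : K, b = (a.1 * n k, a.2.1 * m k, k⁻¹ • a.2.2) with hrE
  set rW := fun a b : G × Z => ∃ k : K, b = (a.1 * m k, k⁻¹ • a.2) with hrW
  refine ⟨Quot.lift (fun p : G × G × Z => Quot.mk rW (p.2.1, p.2.2)) ?_, fun g h z => rfl,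
    Quot.lift (fun p : G × Z => Quot.mk rE (p.1 * (lam p.2)⁻¹, p.1, p.2)) ?_, ?_,
    fun h z => rfl, ?_⟩
  · rintro ⟨g, h, z⟩ b ⟨k, rfl⟩
    exact Quot.sound ⟨k, rfl⟩
  · rintro ⟨h, z⟩ b ⟨k, rfl⟩
    dsimp only
    apply Quot.sound
    refine ⟨k, ?_⟩
    have hc := hconj k (k⁻¹ • z)
    rw [smul_inv_smul] at hc
    have : h * (lam z)⁻¹ * n k = h * m k * (lam (k⁻¹ • z))⁻¹ := by
      rw [hc]; group
    show (h * m k * (lam (k⁻¹ • z))⁻¹, h * m k, k⁻¹ • z)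
      = (h * (lam z)⁻¹ * n k, h * m k, k⁻¹ • z)
    rw [this]
  · apply continuous_quot_lift
    exact continuous_quot_mk.comp
      (((continuous_fst.mul (hlam.comp continuous_snd).inv).prodMk
        (continuous_fst.prodMk continuous_snd)))
  · intro x
    induction x using Quot.ind
    rfl
end
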